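/- (Channel sandwich / information processing lower bound on capacity) Let W : X → (Y → ℝ≥0) be a channel on finite alphabets, and suppose there exists an encoder-decoder pair transmitting a uniformly distributed message W over a message set of size 2^K through W such that H(W | Ŵ) ≤ Δ. Then the capacity satisfies C(W) ≥ K − Δ. -/

import Mathlib

open Finset Real

lemma logb_sum_ineq {ι : Type*} (s : Finset ι) (a b : ι → ℝ)
    (ha : ∀ i ∈ s, 0 ≤ a i) (hb : ∀ i ∈ s, 0 ≤ b i)
    (hab : ∀ i ∈ s, b i = 0 → a i = 0) :
    (∑ i ∈ s, a i) * Real.logb 2 ((∑ i ∈ s, a i) / (∑ i ∈ s, b i))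
      ≤ ∑ i ∈ s, a i * Real.logb 2 (a i / b i) := by
  have hlog2 : (0:ℝ) < Real.log 2 := Real.log_pos one_lt_two
  simp only [Real.logb, mul_div_assoc']
  rw [← Finset.sum_div, div_le_div_iff_of_pos_right hlog2]
  set A := ∑ i ∈ s, a i with hA
  set B := ∑ i ∈ s, b i with hB
  by_cases hB0 : B = 0
  · have hb0 : ∀ i ∈ s, b i = 0 := (Finset.sum_eq_zero_iff_of_nonneg hb).1 hB0
    have ha0 : ∀ i ∈ s, a i = 0 := fun i hi => hab i hi (hb0 i hi)
    have : A = 0 := Finset.sum_eq_zero ha0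
    rw [this, Finset.sum_eq_zero (fun i hi => by rw [ha0 i hi]; ring)]
    simp
  by_cases hA0 : A = 0
  · have ha0 : ∀ i ∈ s, a i = 0 := (Finset.sum_eq_zero_iff_of_nonneg ha).1 hA0
    rw [hA0, Finset.sum_eq_zero (fun i hi => by rw [ha0 i hi]; ring)]
    simp
  have hApos : 0 < A := lt_of_le_of_ne (Finset.sum_nonneg ha) (Ne.symm hA0)
  have hBpos : 0 < B := lt_of_le_of_ne (Finset.sum_nonneg hb) (Ne.symm hB0)
  have key : ∀ i ∈ s, a i * Real.log (A / B) + (a i - A * b i / B)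
      ≤ a i * Real.log (a i / b i) := by
    intro i hi
    by_cases hai : a i = 0
    · rw [hai]
      have : 0 ≤ A * b i / B := div_nonneg (mul_nonneg hApos.le (hb i hi)) hBpos.le
      have h2 := hb i hi
      simp only [zero_mul, zero_sub, zero_add]
      nlinarith
    · have haipos : 0 < a i := lt_of_le_of_ne (ha i hi) (Ne.symm hai)
      have hbipos : 0 < b i := by
        rcases lt_or_eq_of_le (hb i hi) with h | h
        · exact h
        · exact absurd (hab i hi h.symm) hai
      have ht : (0:ℝ) < A * b i / (B * a i) := by positivity
      have hlog := Real.log_le_sub_one_of_pos ht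
      have hdecomp : Real.log (A * b i / (B * a i))
          = Real.log (A / B) - Real.log (a i / b i) := by
        rw [Real.log_div (by positivity) (by positivity),
            Real.log_div (ne_of_gt hApos) (ne_of_gt hBpos),
            Real.log_div (ne_of_gt haipos) (ne_of_gt hbipos),
            Real.log_mul (ne_of_gt hApos) (ne_of_gt hbipos),
            Real.log_mul (ne_of_gt hBpos) (ne_of_gt haipos)]
        ring
      rw [hdecomp] at hlog
      -- hlog : log(A/B) - log(a/b) ≤ A*b/(B*a) - 1
      have hmul := mul_le_mul_of_nonneg_left hlog (le_of_lt haipos)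
      have hid : a i * (A * b i / (B * a i) - 1) = A * b i / B - a i := by
        field_simp
      rw [hid] at hmul
      linarith [hmul]
  calc A * Real.log (A / B)
      = ∑ i ∈ s, (a i * Real.log (A / B) + (a i - A * b i / B)) := by
        rw [Finset.sum_add_distrib, Finset.sum_sub_distrib, ← Finset.sum_mul, ← hA]
        rw [show ∑ i ∈ s, A * b i / B = A * B / B by rw [← Finset.sum_div, ← Finset.mul_sum]]
        field_simp
        ring
    _ ≤ ∑ i ∈ s, a i * Real.log (a i / b i) := Finset.sum_le_sum key

/-- splitting a logb of a quotient with product denominator, with zero-handling. -/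
lemma logb_split (a b c : ℝ) (hb : 0 < b) (ha : 0 ≤ a) (hc : c = 0 → a = 0) :
    a * Real.logb 2 (a / (b * c))
      = a * Real.logb 2 a - a * Real.logb 2 b - a * Real.logb 2 c := by
  by_cases ha0 : a = 0
  · simp [ha0]
  · have hc0 : c ≠ 0 := fun h => ha0 (hc h)
    rw [Real.logb_div ha0 (by positivity), Real.logb_mul (ne_of_gt hb) hc0]
    ring

/-- Mutual information `I(Q, W)` of an input pmf `Q` over channel `W`. -/
noncomputable def mutualInfo {X Y : Type*} [Fintype X] [Fintype Y]
    (Q : X → ℝ) (W : X → Y → ℝ) : ℝ :=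
  ∑ x, ∑ y, Q x * W x y *
    Real.logb 2 ((Q x * W x y) / (Q x * ∑ x', Q x' * W x' y))

/-- Shannon capacity `C(W) = sup_Q I(Q, W)`. -/
noncomputable def capacity {X Y : Type*} [Fintype X] [Fintype Y]
    (W : X → Y → ℝ) : ℝ :=
  sSup {r | ∃ Q : X → ℝ, (∀ x, 0 ≤ Q x) ∧ (∑ x, Q x) = 1 ∧ r = mutualInfo Q W}

/-- Shannon entropy (base 2) of a finite nonnegative vector (e.g. a pmf). -/
noncomputable def ent {α : Type*} [Fintype α] (f : α → ℝ) : ℝ :=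
  -∑ a, f a * Real.logb 2 (f a)

/-- Mutual information is bounded, hence the capacity set is bounded above. -/
lemma mutualInfo_le {X Y : Type*} [Fintype X] [Fintype Y]
    (W : X → Y → ℝ) (hW0 : ∀ x y, 0 ≤ W x y) (hW1 : ∀ x, ∑ y, W x y = 1)
    (Q : X → ℝ) (hQ0 : ∀ x, 0 ≤ Q x) (hQ1 : (∑ x, Q x) = 1) :
    mutualInfo Q W ≤ (Fintype.card X : ℝ) * (Fintype.card Y) * 2 := by
  have hlog2 : (0:ℝ) < Real.log 2 := Real.log_pos one_lt_two
  have hlog2' : (0.5:ℝ) ≤ Real.log 2 := by nlinarith [Real.log_two_gt_d9]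
  have hbound : ∀ x y, Q x * W x y *
      Real.logb 2 ((Q x * W x y) / (Q x * ∑ x', Q x' * W x' y)) ≤ 2 := by
    intro x y
    by_cases ha : Q x * W x y = 0
    · rw [ha]; norm_num
    · have hQx : 0 < Q x := by
        rcases lt_or_eq_of_le (hQ0 x) with h | h
        · exact h
        · exact absurd (by rw [← h, zero_mul]) ha
      have hWxy : 0 < W x y := by
        rcases lt_or_eq_of_le (hW0 x y) with h | h
        · exact h
        · exact absurd (by rw [← h, mul_zero]) ha
      have hQle1 : Q x ≤ 1 := by
        rw [← hQ1]
        exact Finset.single_le_sum (fun x' _ => hQ0 x') (Finset.mem_univ x)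
      have hWle1 : W x y ≤ 1 := by
        rw [← hW1 x]
        exact Finset.single_le_sum (fun y' _ => hW0 x y') (Finset.mem_univ y)
      have hpYge : Q x * W x y ≤ ∑ x', Q x' * W x' y :=
        Finset.single_le_sum (fun x' _ => mul_nonneg (hQ0 x') (hW0 x' y)) (Finset.mem_univ x)
      have hpYpos : 0 < ∑ x', Q x' * W x' y := lt_of_lt_of_le (by positivity) hpYge
      have hratio : (Q x * W x y) / (Q x * ∑ x', Q x' * W x' y) ≤ 1 / Q x := by
        rw [div_le_div_iff₀ (by positivity) hQx]
        nlinarith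
      have hlogle : Real.logb 2 ((Q x * W x y) / (Q x * ∑ x', Q x' * W x' y))
          ≤ -Real.logb 2 (Q x) := by
        rw [← Real.logb_inv, ← one_div]
        exact Real.logb_le_logb_of_le one_lt_two (by positivity) hratio
      have hnn : 0 ≤ -Real.logb 2 (Q x) := by
        rw [← Real.logb_inv]
        exact Real.logb_nonneg one_lt_two (one_le_inv_iff₀.2 ⟨hQx, hQle1⟩)
      have hstep : Q x * W x y * Real.logb 2 ((Q x * W x y) / (Q x * ∑ x', Q x' * W x' y))
          ≤ Q x * (-Real.logb 2 (Q x)) := by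
        calc Q x * W x y * Real.logb 2 ((Q x * W x y) / (Q x * ∑ x', Q x' * W x' y))
            ≤ Q x * W x y * (-Real.logb 2 (Q x)) :=
              mul_le_mul_of_nonneg_left hlogle (by positivity)
          _ ≤ Q x * (-Real.logb 2 (Q x)) :=
              mul_le_mul_of_nonneg_right (by nlinarith) hnn
      refine le_trans hstep ?_
      have h2 := Real.log_le_sub_one_of_pos (show (0:ℝ) < (Q x)⁻¹ by positivity)
      rw [Real.log_inv] at h2
      have h3 : Q x * (-Real.log (Q x)) ≤ 1 - Q x := by
        have := mul_le_mul_of_nonneg_left h2 hQx.le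
        have hc : Q x * ((Q x)⁻¹ - 1) = 1 - Q x := by
          field_simp
        nlinarith [this, hc]
      rw [Real.logb, show Q x * -(Real.log (Q x) / Real.log 2)
          = (Q x * -Real.log (Q x)) / Real.log 2 by ring, div_le_iff₀ hlog2]
      nlinarith
  calc mutualInfo Q W
      ≤ ∑ _x : X, ∑ _y : Y, (2:ℝ) := by
        rw [mutualInfo]
        exact Finset.sum_le_sum fun x _ => Finset.sum_le_sum fun y _ => hbound x y
    _ = (Fintype.card X : ℝ) * (Fintype.card Y) * 2 := by
        simp [Finset.sum_const, Finset.card_univ, nsmul_eq_mul]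
        ring

open Finset in
/-- if a uniformly distributed `K`-bit message sent through the channel
`W` via encoder `enc` and decoder `dec` satisfies `H(W | Ŵ) ≤ Δ`, then
`C(W) ≥ K − Δ`. Here the joint pmf of (message, decoded message) is
`r(w, ŵ) = 2^{-K} ∑_{y : dec y = ŵ} W(y | enc w)`. -/
theorem capacity_ge_of_fano {X Y : Type*} [Fintype X] [Fintype Y] [DecidableEq Y]
    (K : ℕ) (W : X → Y → ℝ)
    (hW0 : ∀ x y, 0 ≤ W x y) (hW1 : ∀ x, ∑ y, W x y = 1)
    (enc : (Fin K → Bool) → X) (dec : Y → (Fin K → Bool)) (Δ : ℝ)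
    (hfano :
      ent (fun wp : (Fin K → Bool) × (Fin K → Bool) =>
          (1 / 2 ^ K) * ∑ y ∈ univ.filter (fun y => dec y = wp.2), W (enc wp.1) y)
        - ent (fun what : Fin K → Bool =>
          ∑ w : Fin K → Bool,
            (1 / 2 ^ K) * ∑ y ∈ univ.filter (fun y => dec y = what), W (enc w) y)
      ≤ Δ) :
    (K : ℝ) - Δ ≤ capacity W := by
  classical
  set p : ℝ := 1 / 2 ^ K with hpdef
  have hp : 0 < p := by positivity
  -- the channel from X to decoded messages
  set W' : X → (Fin K → Bool) → ℝ := fun x what => ∑ y ∈ univ.filter (fun y => dec y = what), W x y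
    with hW'def
  have hW'0 : ∀ x what, 0 ≤ W' x what := fun x what => Finset.sum_nonneg fun y _ => hW0 x y
  have hW'1 : ∀ x, ∑ what, W' x what = 1 := by
    intro x
    rw [← hW1 x]
    exact Finset.sum_fiberwise univ dec (W x)
  -- the input distribution: pushforward of uniform through enc
  set Q : X → ℝ := fun x => ∑ _w ∈ univ.filter (fun w => enc w = x), p with hQdef
  have hQ0 : ∀ x, 0 ≤ Q x := fun x => Finset.sum_nonneg fun _ _ => hp.le
  have hcardM : (Fintype.card (Fin K → Bool) : ℝ) * p = 1 := by
    have : Fintype.card (Fin K → Bool) = 2 ^ K := by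
      simp [Fintype.card_fun]
    rw [this, hpdef]
    push_cast
    field_simp
  have hQ1 : ∑ x, Q x = 1 := by
    rw [hQdef]
    rw [Finset.sum_fiberwise univ enc (fun _ => p)]
    rw [Finset.sum_const, nsmul_eq_mul, ← Fintype.card, hcardM]
  -- marginal on decoded messages
  set q : (Fin K → Bool) → ℝ := fun what => ∑ w : (Fin K → Bool), p * W' (enc w) what with hqdef
  have hq0 : ∀ what : Fin K → Bool, 0 ≤ q what :=
    fun what => Finset.sum_nonneg fun w _ => mul_nonneg hp.le (hW'0 _ _)
  -- output marginal
  set pY : Y → ℝ := fun y => ∑ x', Q x' * W x' y with hpYdef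
  have hpY : ∀ y, pY y = ∑ w : (Fin K → Bool), p * W (enc w) y := by
    intro y
    rw [hpYdef]
    simp only [hQdef]
    rw [← Finset.sum_fiberwise univ enc (fun w => p * W (enc w) y)]
    refine Finset.sum_congr rfl fun x _ => ?_
    rw [Finset.sum_mul]
    refine Finset.sum_congr rfl fun w hw => ?_
    rw [(Finset.mem_filter.1 hw).2]
  have hq_alt : ∀ what : Fin K → Bool, q what = ∑ y ∈ univ.filter (fun y => dec y = what), pY y := by
    intro what
    rw [hqdef]
    simp only [hW'def, Finset.mul_sum]
    rw [Finset.sum_comm]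
    exact Finset.sum_congr rfl fun y _ => (hpY y).symm
  -- joint pmf of (message, decoded message)
  set r : (Fin K → Bool) × (Fin K → Bool) → ℝ := fun wp => p * W' (enc wp.1) wp.2 with hrdef
  have hr0 : ∀ wp, 0 ≤ r wp := fun wp => mul_nonneg hp.le (hW'0 _ _)
  have hq_zero : ∀ w what, q what = 0 → r (w, what) = 0 := by
    intro w what h
    exact (Finset.sum_eq_zero_iff_of_nonneg
      (fun w' _ => mul_nonneg hp.le (hW'0 _ _))).1 h w (Finset.mem_univ w)
  have hsum_r : ∑ w : Fin K → Bool, ∑ what : Fin K → Bool, r (w, what) = 1 := by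
    calc ∑ w : Fin K → Bool, ∑ what : Fin K → Bool, r (w, what)
        = ∑ _w : Fin K → Bool, p := by
          refine Finset.sum_congr rfl fun w _ => ?_
          rw [hrdef]
          simp only
          rw [← Finset.mul_sum, hW'1, mul_one]
      _ = 1 := by rw [Finset.sum_const, nsmul_eq_mul, ← Fintype.card, hcardM]
  have hlogp : Real.logb 2 p = -(K : ℝ) := by
    rw [hpdef, one_div, Real.logb_inv, Real.logb_pow,
      Real.logb_self_eq_one one_lt_two]
    ring
  have hfano' : ent r - ent q ≤ Δ := hfano
  have hentr : ent r
      = -∑ w : Fin K → Bool, ∑ what : Fin K → Bool,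
          r (w, what) * Real.logb 2 (r (w, what)) := by
    rw [ent, Fintype.sum_prod_type]
  -- Step 1: I(W;Ŵ) ≥ K - Δ
  have step1 : (K : ℝ) - Δ ≤ ∑ w : Fin K → Bool, ∑ what : Fin K → Bool,
      r (w, what) * Real.logb 2 (r (w, what) / (p * q what)) := by
    have expand : ∀ w what, r (w, what) * Real.logb 2 (r (w, what) / (p * q what))
        = r (w, what) * Real.logb 2 (r (w, what)) - r (w, what) * Real.logb 2 p
          - r (w, what) * Real.logb 2 (q what) :=
      fun w what => logb_split _ _ _ hp (hr0 _) (hq_zero w what)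
    have h2 : ∑ w : Fin K → Bool, ∑ what : Fin K → Bool,
        r (w, what) * Real.logb 2 p = -(K : ℝ) := by
      simp only [← Finset.sum_mul]
      rw [hsum_r, one_mul, hlogp]
    have h3 : ∑ w : Fin K → Bool, ∑ what : Fin K → Bool,
        r (w, what) * Real.logb 2 (q what) = -ent q := by
      rw [Finset.sum_comm, ent, neg_neg]
      refine Finset.sum_congr rfl fun what _ => ?_
      rw [← Finset.sum_mul]
    calc (K : ℝ) - Δ ≤ (K : ℝ) - (ent r - ent q) := by linarith
      _ = ∑ w : Fin K → Bool, ∑ what : Fin K → Bool,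
          (r (w, what) * Real.logb 2 (r (w, what)) - r (w, what) * Real.logb 2 p
            - r (w, what) * Real.logb 2 (q what)) := by
          simp only [Finset.sum_sub_distrib]
          rw [h2, h3, hentr]
          ring
      _ = _ := by
          exact (Finset.sum_congr rfl fun w _ =>
            Finset.sum_congr rfl fun what _ => (expand w what).symm)
  -- Step 2: grouping messages by their encoding
  have step2 : ∑ w : Fin K → Bool, ∑ what : Fin K → Bool,
        r (w, what) * Real.logb 2 (r (w, what) / (p * q what))
      = ∑ x : X, ∑ what : Fin K → Bool,
        Q x * W' x what * Real.logb 2 (Q x * W' x what / (Q x * q what)) := by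
    rw [Finset.sum_comm]
    conv_rhs => rw [Finset.sum_comm]
    refine Finset.sum_congr rfl fun what _ => ?_
    rw [← Finset.sum_fiberwise univ enc
      (fun w => r (w, what) * Real.logb 2 (r (w, what) / (p * q what)))]
    refine Finset.sum_congr rfl fun x _ => ?_
    have hfib : ∀ w ∈ univ.filter (fun w => enc w = x),
        r (w, what) * Real.logb 2 (r (w, what) / (p * q what))
        = p * W' x what * Real.logb 2 (p * W' x what / (p * q what)) := by
      intro w hw
      rw [hrdef]
      simp only
      rw [(Finset.mem_filter.1 hw).2]
    rw [Finset.sum_congr rfl hfib, Finset.sum_const, nsmul_eq_mul]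
    have hQx : Q x = ((univ.filter (fun w => enc w = x)).card : ℝ) * p := by
      rw [hQdef]
      simp only
      rw [Finset.sum_const, nsmul_eq_mul]
    by_cases hn : (univ.filter (fun w => enc w = x)).card = 0
    · rw [hQx, hn]
      simp
    · have hQpos : 0 < Q x := by
        rw [hQx]
        have hcpos : 0 < ((univ.filter (fun w => enc w = x)).card : ℝ) := by
          exact_mod_cast Nat.pos_of_ne_zero hn
        positivity
      have hcancel : p * W' x what / (p * q what) = Q x * W' x what / (Q x * q what) := by
        rw [mul_div_mul_left _ _ (ne_of_gt hp), mul_div_mul_left _ _ (ne_of_gt hQpos)]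
      rw [hcancel, hQx]
      ring
  -- Step 3: data processing on the decoder side (log-sum inequality)
  have step3 : ∑ x : X, ∑ what : Fin K → Bool,
        Q x * W' x what * Real.logb 2 (Q x * W' x what / (Q x * q what))
      ≤ mutualInfo Q W := by
    have hMI : mutualInfo Q W
        = ∑ x : X, ∑ y : Y, Q x * W x y * Real.logb 2 (Q x * W x y / (Q x * pY y)) := rfl
    rw [hMI]
    refine Finset.sum_le_sum fun x _ => ?_
    rw [← Finset.sum_fiberwise univ dec
      (fun y => Q x * W x y * Real.logb 2 (Q x * W x y / (Q x * pY y)))]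
    refine Finset.sum_le_sum fun what _ => ?_
    have hls := logb_sum_ineq (univ.filter fun y => dec y = what)
      (fun y => Q x * W x y) (fun y => Q x * pY y)
      (fun y _ => mul_nonneg (hQ0 x) (hW0 x y))
      (fun y _ => mul_nonneg (hQ0 x) (Finset.sum_nonneg fun x' _ =>
        mul_nonneg (hQ0 x') (hW0 x' y)))
      ?_
    · have hsa : ∑ y ∈ univ.filter (fun y => dec y = what), Q x * W x y
          = Q x * W' x what := by
        rw [hW'def]
        simp only
        rw [Finset.mul_sum]
      have hsb : ∑ y ∈ univ.filter (fun y => dec y = what), Q x * pY y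
          = Q x * q what := by
        rw [hq_alt what, Finset.mul_sum]
      rw [hsa, hsb] at hls
      exact hls
    · intro y _ hzero
      rcases mul_eq_zero.1 hzero with h | h
      · simp only [h, zero_mul]
      · have : ∀ x' ∈ (univ : Finset X), Q x' * W x' y = 0 :=
          (Finset.sum_eq_zero_iff_of_nonneg
            (fun x' _ => mul_nonneg (hQ0 x') (hW0 x' y))).1 h
        exact this x (Finset.mem_univ x)
  -- Conclusion
  have hmem : mutualInfo Q W ∈
      {v | ∃ Q' : X → ℝ, (∀ x, 0 ≤ Q' x) ∧ (∑ x, Q' x) = 1 ∧ v = mutualInfo Q' W} :=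
    ⟨Q, hQ0, hQ1, rfl⟩
  have hbdd : BddAbove
      {v | ∃ Q' : X → ℝ, (∀ x, 0 ≤ Q' x) ∧ (∑ x, Q' x) = 1 ∧ v = mutualInfo Q' W} := by
    refine ⟨(Fintype.card X : ℝ) * (Fintype.card Y) * 2, ?_⟩
    rintro v ⟨Q', h0, h1, rfl⟩
    exact mutualInfo_le W hW0 hW1 Q' h0 h1
  have hsup : mutualInfo Q W ≤ capacity W := le_csSup hbdd hmem
  linarith [step1, step2 ▸ step1, step3, hsup, step1.trans_eq step2]
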